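/- Fix integers e > 1 and k with 0 ≤ k ≤ e−1, and let Υ act on ℤ^N coordinatewise. If λ ∈ ℤ^N is e-anti-dominant, i.e. λ_1 ≤ λ_2 ≤ ⋯ ≤ λ_N ≤ λ_1 + e, then Υ(λ) is (e+1)-anti-dominant, i.e. Υ(λ_1) ≤ Υ(λ_2) ≤ ⋯ ≤ Υ(λ_N) ≤ Υ(λ_1) + (e+1). (In particular Υ : ℤ → ℤ is strictly increasing and satisfies Υ(a + e) = Υ(a) + (e+1) for all a ∈ ℤ.) -/
import Mathlib


/-- The map `Υ : ℤ → ℤ` defined by `Υ(a·e + b) = a·(e+1) + b` if `0 ≤ b ≤ k` and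
`Υ(a·e + b) = a·(e+1) + b + 1` if `k+1 ≤ b ≤ e−1`, where `b` is the residue of the
argument modulo `e`. -/
def Ups (e k a : ℤ) : ℤ :=
  if a % e ≤ k then a / e * (e + 1) + a % e else a / e * (e + 1) + a % e + 1

/-- A weight `λ ∈ ℤ^N` is `m`-anti-dominant if `λ_1 ≤ λ_2 ≤ ⋯ ≤ λ_N ≤ λ_1 + m`. -/
def IsAntiDominant (m : ℤ) {N : ℕ} (hN : 0 < N) (lam : Fin N → ℤ) : Prop :=
  (∀ i j : Fin N, i ≤ j → lam i ≤ lam j) ∧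
    lam ⟨N - 1, Nat.sub_lt hN one_pos⟩ ≤ lam ⟨0, hN⟩ + m

lemma ups_shift (e k : ℤ) (he : 1 < e) (a : ℤ) :
    Ups e k (a + e) = Ups e k a + (e + 1) := by
  have he0 : e ≠ 0 := by omega
  have h1 : (a + e) % e = a % e := by
    simpa using Int.add_mul_emod_self_right (a := a) (b := 1) (c := e)
  have h2 : (a + e) / e = a / e + 1 := by
    simpa using Int.add_mul_ediv_right a 1 he0
  unfold Ups
  rw [h1, h2]
  split_ifs <;> ring

lemma ups_succ (e k : ℤ) (he : 1 < e) (hk0 : 0 ≤ k) (a : ℤ) :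
    Ups e k a < Ups e k (a + 1) := by
  have he0 : (0:ℤ) < e := by omega
  have hb0 : 0 ≤ a % e := Int.emod_nonneg a (by omega)
  have hb1 : a % e < e := Int.emod_lt_of_pos a he0
  rcases lt_or_eq_of_le (by omega : a % e ≤ e - 1) with h | h
  · have hd : (a + 1) / e = a / e ∧ (a + 1) % e = a % e + 1 := by
      rw [Int.ediv_emod_unique he0]
      constructor
      · have := Int.mul_ediv_add_emod a e
        omega
      · omega
    unfold Ups
    rw [hd.1, hd.2]
    split_ifs <;> omega
  · have hd : (a + 1) / e = a / e + 1 ∧ (a + 1) % e = 0 := by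
      rw [Int.ediv_emod_unique he0]
      constructor
      · have := Int.mul_ediv_add_emod a e
        ring_nf
        omega
      · omega
    unfold Ups
    rw [hd.1, hd.2, h]
    have hQ : (a / e + 1) * (e + 1) = a / e * (e + 1) + (e + 1) := by ring
    rw [hQ]
    split_ifs <;> omega

/-- `Υ` is strictly increasing, satisfies `Υ(a+e) = Υ(a) + (e+1)`, and (applied
coordinatewise) sends `e`-anti-dominant weights to `(e+1)`-anti-dominant weights. -/
theorem stmt1 (e k : ℤ) (he : 1 < e) (hk0 : 0 ≤ k) (hk1 : k ≤ e - 1)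
    (N : ℕ) (hN : 0 < N) (lam : Fin N → ℤ) :
    StrictMono (Ups e k) ∧
    (∀ a : ℤ, Ups e k (a + e) = Ups e k a + (e + 1)) ∧
    (IsAntiDominant e hN lam → IsAntiDominant (e + 1) hN (fun i => Ups e k (lam i))) := by
  have hmono : StrictMono (Ups e k) :=
    strictMono_int_of_lt_succ (ups_succ e k he hk0)
  refine ⟨hmono, ups_shift e k he, fun ⟨h1, h2⟩ => ⟨fun i j hij => hmono.monotone (h1 i j hij), ?_⟩⟩
  calc Ups e k (lam ⟨N - 1, Nat.sub_lt hN one_pos⟩) ≤ Ups e k (lam ⟨0, hN⟩ + e) :=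
        hmono.monotone h2
    _ = Ups e k (lam ⟨0, hN⟩) + (e + 1) := ups_shift e k he _
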